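/- Let q be a prime power. For all positive integers c, ℓ and every integer L with 1 ≤ L ≤ q^ℓ the following holds. For every set S ⊆ 𝔽_q^ℓ with |S| = L, there exist a vector w ∈ 𝔽_q^ℓ, an integer d with d ≥ (1/c)·log_q(L/2) − (1 − 1/c)·log_q((q−1)·ℓ), and vectors v₁, …, v_d ∈ S such that the sequence v₁ + w, v₂ + w, …, v_d + w is a c-increasing chain of length d. -/

import Mathlib

/-- The support of a vector `v ∈ 𝔽_q^ℓ`: the set of coordinates where `v` is nonzero. -/
def suppQ {F : Type*} [Zero F] [DecidableEq F] {ℓ : ℕ} (v : Fin ℓ → F) : Finset (Fin ℓ) :=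
  Finset.univ.filter (fun i => v i ≠ 0)

/-- A sequence `v 0, …, v (d-1)` of vectors in `𝔽_q^ℓ` is a `c`-increasing chain if for
every `j`, `|supp(v j) \ (supp(v 0) ∪ ⋯ ∪ supp(v (j-1)))| ≥ c`. -/
def IncreasingChainQ {F : Type*} [Zero F] [DecidableEq F] {ℓ : ℕ} (c : ℕ) {d : ℕ}
    (v : Fin d → (Fin ℓ → F)) : Prop :=
  ∀ j : Fin d,
    c ≤ ((suppQ (v j)) \ ((Finset.Iio j).biUnion (fun i => suppQ (v i)))).card

set_option linter.unusedSectionVars false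
set_option linter.unusedVariables false

open Finset

namespace IncChainAux

variable {F : Type*} [Fintype F] [DecidableEq F] {ℓ : ℕ}

/-- `T` "cross-shatters" `C`: for every pattern `a` there is `s ∈ T` differing from `a`
on every coordinate of `C`. -/
def Sh (T : Finset (Fin ℓ → F)) (C : Finset (Fin ℓ)) : Prop :=
  ∀ a : Fin ℓ → F, ∃ s ∈ T, ∀ i ∈ C, s i ≠ a i

instance (T : Finset (Fin ℓ → F)) (C : Finset (Fin ℓ)) : Decidable (Sh T C) :=
  decidable_of_iff (∀ a : Fin ℓ → F, ∃ s ∈ T, ∀ i ∈ C, s i ≠ a i) Iff.rfl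

lemma Sh.mono {T T' : Finset (Fin ℓ → F)} {C : Finset (Fin ℓ)} (hTT : T ⊆ T')
    (h : Sh T C) : Sh T' C := fun a => by
  obtain ⟨s, hs, hd⟩ := h a; exact ⟨s, hTT hs, hd⟩

lemma Sh.anti {T : Finset (Fin ℓ → F)} {C C' : Finset (Fin ℓ)} (hCC : C' ⊆ C)
    (h : Sh T C) : Sh T C' := fun a => by
  obtain ⟨s, hs, hd⟩ := h a; exact ⟨s, hs, fun i hi => hd i (hCC hi)⟩

lemma ss_count (V : Finset (Fin ℓ)) (T : Finset (Fin ℓ → F))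
    (hT : ∀ s ∈ T, ∀ t ∈ T, ∀ i, i ∉ V → s i = t i) :
    T.card ≤ ∑ C ∈ V.powerset,
      (if Sh T C then (Fintype.card F - 1) ^ C.card else 0) := by
  induction V using Finset.induction generalizing T with
  | empty =>
    rcases T.eq_empty_or_nonempty with rfl | ⟨t, ht⟩
    · simp
    · have hT1 : T.card ≤ 1 := Finset.card_le_one.2 (fun a ha b hb => by
        funext i; exact hT a ha b hb i (notMem_empty i))
      have hsh : Sh T ∅ := fun a => ⟨t, ht, fun i hi => absurd hi (notMem_empty i)⟩
      simpa [hsh] using hT1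
  | @insert i V' hi IH =>
    -- fiber decomposition along coordinate i
    have hfib : T.card = ∑ b : F, (T.filter (fun s => s i = b)).card :=
      Finset.card_eq_sum_card_fiberwise (fun s _ => mem_univ (s i))
    have hstep : ∀ b : F, (T.filter (fun s => s i = b)).card ≤
        ∑ C ∈ V'.powerset,
          (if Sh (T.filter (fun s => s i = b)) C then (Fintype.card F - 1) ^ C.card else 0) := by
      intro b
      refine IH _ (fun s hs t ht j hj => ?_)
      rcases eq_or_ne j i with rfl | hji
      · rw [(mem_filter.1 hs).2, (mem_filter.1 ht).2]
      · exact hT s (mem_filter.1 hs).1 t (mem_filter.1 ht).1 j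
          (fun hjV => hj (by rcases mem_insert.1 hjV with h | h; exact absurd h hji; exact h))
    -- per-C recombination
    have perC : ∀ C ∈ V'.powerset,
        (∑ b : F, (if Sh (T.filter (fun s => s i = b)) C then (Fintype.card F - 1) ^ C.card else 0))
        ≤ (if Sh T C then (Fintype.card F - 1) ^ C.card else 0)
          + (if Sh T (insert i C) then (Fintype.card F - 1) ^ (insert i C).card else 0) := by
      intro C hC
      have hiC : i ∉ C := fun h => hi (mem_powerset.1 hC h)
      obtain ⟨k, hk⟩ : ∃ k, (univ.filter (fun b => Sh (T.filter (fun s => s i = b)) C)).card = k :=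
        ⟨_, rfl⟩
      have hsum : (∑ b : F, (if Sh (T.filter (fun s => s i = b)) C then
          (Fintype.card F - 1) ^ C.card else 0)) = k * (Fintype.card F - 1) ^ C.card := by
        rw [← Finset.sum_filter, Finset.sum_const, smul_eq_mul, hk]
      rw [hsum]
      rcases Nat.eq_zero_or_pos k with hk0 | hk1
      · simp [hk0]
      · have hShT : Sh T C := by
          obtain ⟨b, hb⟩ := Finset.card_pos.1 (hk ▸ hk1)
          exact (Finset.mem_filter.1 hb).2.mono (filter_subset _ _)
        rcases le_or_gt k 1 with hk1' | hk2
        · have hle : k * (Fintype.card F - 1) ^ C.card ≤ (Fintype.card F - 1) ^ C.card := by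
            calc k * (Fintype.card F - 1) ^ C.card ≤ 1 * (Fintype.card F - 1) ^ C.card :=
              Nat.mul_le_mul_right _ hk1'
            _ = (Fintype.card F - 1) ^ C.card := one_mul _
          simp only [if_pos hShT]
          exact le_trans hle (Nat.le_add_right _ _)
        · -- k ≥ 2 : also insert i C is shattered by T
          have hShT' : Sh T (insert i C) := by
            intro a
            have hbex : ∃ b ∈ univ.filter (fun b => Sh (T.filter (fun s => s i = b)) C),
                b ≠ a i := by
              by_contra hcon
              push_neg at hcon
              have hsub : univ.filter (fun b => Sh (T.filter (fun s => s i = b)) C) ⊆ {a i} :=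
                fun b hb => mem_singleton.2 (hcon b hb)
              have hcard := Finset.card_le_card hsub
              rw [hk, card_singleton] at hcard
              exact absurd hk2 (not_lt.2 hcard)
            obtain ⟨b, hb, hbne⟩ := hbex
            obtain ⟨s, hs, hsd⟩ := (Finset.mem_filter.1 hb).2 a
            refine ⟨s, (mem_filter.1 hs).1, fun j hj => ?_⟩
            rcases mem_insert.1 hj with rfl | hjC
            · rw [(mem_filter.1 hs).2]; exact hbne
            · exact hsd j hjC
          have hkq : k ≤ Fintype.card F := by
            rw [← hk]
            calc (univ.filter (fun b => Sh (T.filter (fun s => s i = b)) C)).card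
                ≤ (univ : Finset F).card := Finset.card_filter_le _ _
            _ = Fintype.card F := Finset.card_univ
          have hq1 : 1 ≤ Fintype.card F := le_trans (le_of_lt hk2) hkq
          simp only [if_pos hShT, if_pos hShT', Finset.card_insert_of_notMem hiC, pow_succ]
          calc k * (Fintype.card F - 1) ^ C.card
              ≤ Fintype.card F * (Fintype.card F - 1) ^ C.card := Nat.mul_le_mul_right _ hkq
          _ = (Fintype.card F - 1) ^ C.card
              + (Fintype.card F - 1) ^ C.card * (Fintype.card F - 1) := by
            obtain ⟨y, hy⟩ : ∃ y, Fintype.card F - 1 = y := ⟨_, rfl⟩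
            have h1 : Fintype.card F = y + 1 := by
              rw [← hy]; exact (Nat.succ_pred_eq_of_pos hq1).symm
            rw [hy, h1]; ring
    calc T.card = ∑ b : F, (T.filter (fun s => s i = b)).card := hfib
    _ ≤ ∑ b : F, ∑ C ∈ V'.powerset,
          (if Sh (T.filter (fun s => s i = b)) C then (Fintype.card F - 1) ^ C.card else 0) :=
        Finset.sum_le_sum (fun b _ => hstep b)
    _ = ∑ C ∈ V'.powerset, ∑ b : F,
          (if Sh (T.filter (fun s => s i = b)) C then (Fintype.card F - 1) ^ C.card else 0) :=
        Finset.sum_comm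
    _ ≤ ∑ C ∈ V'.powerset,
          ((if Sh T C then (Fintype.card F - 1) ^ C.card else 0)
          + (if Sh T (insert i C) then (Fintype.card F - 1) ^ (insert i C).card else 0)) :=
        Finset.sum_le_sum perC
    _ = (∑ C ∈ V'.powerset, (if Sh T C then (Fintype.card F - 1) ^ C.card else 0))
        + ∑ C ∈ V'.powerset,
            (if Sh T (insert i C) then (Fintype.card F - 1) ^ (insert i C).card else 0) :=
        Finset.sum_add_distrib
    _ = (∑ C ∈ V'.powerset, (if Sh T C then (Fintype.card F - 1) ^ C.card else 0))
        + ∑ D ∈ V'.powerset.image (insert i),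
            (if Sh T D then (Fintype.card F - 1) ^ D.card else 0) := by
        congr 1
        rw [Finset.sum_image]
        intro C hC C' hC' hins
        have hiC : i ∉ C := fun h => hi (mem_powerset.1 hC h)
        have hiC' : i ∉ C' := fun h => hi (mem_powerset.1 hC' h)
        rw [← Finset.erase_insert hiC, ← Finset.erase_insert hiC', hins]
    _ = ∑ C ∈ (insert i V').powerset, (if Sh T C then (Fintype.card F - 1) ^ C.card else 0) := by
        rw [Finset.powerset_insert, Finset.sum_union]
        rw [Finset.disjoint_left]
        intro D hD hD'
        obtain ⟨C, hC, rfl⟩ := Finset.mem_image.1 hD'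
        exact hi (mem_powerset.1 hD (mem_insert_self i C))


lemma exists_shattered (c : ℕ) (hc : 0 < c) (W : Finset (Fin ℓ)) (T : Finset (Fin ℓ → F))
    (hT : ∀ s ∈ T, ∀ t ∈ T, ∀ i, i ∉ W → s i = t i)
    (hbig : (∑ i ∈ Finset.range c, ℓ.choose i * (Fintype.card F - 1) ^ i) < T.card) :
    ∃ C, C ⊆ W ∧ C.card = c ∧ Sh T C := by
  by_contra hcon
  push_neg at hcon
  have key : ∀ C ∈ W.powerset, Sh T C → C.card < c := by
    intro C hC hSh
    by_contra hge
    push_neg at hge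
    obtain ⟨C', hC'C, hC'card⟩ := Finset.exists_subset_card_eq hge
    exact hcon C' (hC'C.trans (mem_powerset.1 hC)) hC'card (hSh.anti hC'C)
  have h1 : T.card ≤ ∑ C ∈ W.powerset,
      (if Sh T C then (Fintype.card F - 1) ^ C.card else 0) := ss_count W T hT
  have h2 : ∑ C ∈ W.powerset, (if Sh T C then (Fintype.card F - 1) ^ C.card else 0)
      ≤ ∑ C ∈ W.powerset, (if C.card < c then (Fintype.card F - 1) ^ C.card else 0) := by
    refine Finset.sum_le_sum (fun C hC => ?_)
    by_cases hSh : Sh T C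
    · rw [if_pos hSh, if_pos (key C hC hSh)]
    · rw [if_neg hSh]; exact Nat.zero_le _
  have h3 : ∑ C ∈ W.powerset, (if C.card < c then (Fintype.card F - 1) ^ C.card else 0)
      = ∑ C ∈ W.powerset.filter (fun C => C.card < c), (Fintype.card F - 1) ^ C.card :=
    (Finset.sum_filter _ _).symm
  have h4 : W.powerset.filter (fun C => C.card < c)
      = (Finset.range c).biUnion (fun i => W.powersetCard i) := by
    ext D
    simp only [mem_filter, mem_powerset, mem_biUnion, mem_range, Finset.mem_powersetCard]
    constructor
    · rintro ⟨hsub, hlt⟩; exact ⟨D.card, hlt, hsub, rfl⟩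
    · rintro ⟨i, hi, hsub, rfl⟩; exact ⟨hsub, hi⟩
  have h5 : ∑ C ∈ (Finset.range c).biUnion (fun i => W.powersetCard i),
        (Fintype.card F - 1) ^ C.card
      = ∑ i ∈ Finset.range c, ∑ C ∈ W.powersetCard i, (Fintype.card F - 1) ^ C.card := by
    refine Finset.sum_biUnion ?_
    intro a _ b _ hab
    simp only [Finset.disjoint_left]
    intro D hDa hDb
    exact hab ((Finset.mem_powersetCard.1 hDa).2.symm.trans (Finset.mem_powersetCard.1 hDb).2)
  have h6 : ∀ i ∈ Finset.range c, ∑ C ∈ W.powersetCard i, (Fintype.card F - 1) ^ C.card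
      ≤ ℓ.choose i * (Fintype.card F - 1) ^ i := by
    intro i _
    have : ∑ C ∈ W.powersetCard i, (Fintype.card F - 1) ^ C.card
        = ∑ C ∈ W.powersetCard i, (Fintype.card F - 1) ^ i :=
      Finset.sum_congr rfl (fun C hC => by rw [(Finset.mem_powersetCard.1 hC).2])
    rw [this, Finset.sum_const, smul_eq_mul, Finset.card_powersetCard]
    refine Nat.mul_le_mul_right _ (Nat.choose_le_choose i ?_)
    calc W.card ≤ (univ : Finset (Fin ℓ)).card := Finset.card_le_univ W
    _ = ℓ := by simp
  have hA : T.card ≤ ∑ i ∈ Finset.range c, ∑ C ∈ W.powersetCard i,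
      (Fintype.card F - 1) ^ C.card := by
    rw [← h5, ← h4, ← h3]
    exact h1.trans h2
  have hB := hA.trans (Finset.sum_le_sum h6)
  omega

lemma geom_bound (x : ℕ) (hx : 2 ≤ x) : ∀ c : ℕ, 1 ≤ c →
    ∑ i ∈ Finset.range c, x ^ i ≤ 2 * x ^ (c - 1) := by
  intro c
  induction c with
  | zero => omega
  | succ n IH =>
    intro _
    rcases Nat.eq_zero_or_pos n with rfl | hn
    · simp
    · rw [Finset.sum_range_succ]
      have h1 := IH hn
      have h2 : 2 * x ^ (n - 1) ≤ x ^ n := by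
        calc 2 * x ^ (n - 1) ≤ x * x ^ (n - 1) := Nat.mul_le_mul_right _ hx
        _ = x ^ (n - 1 + 1) := by rw [pow_succ]; ring
        _ = x ^ n := by congr 1; omega
      have : ∑ i ∈ Finset.range n, x ^ i + x ^ n ≤ x ^ n + x ^ n := by
        have := h1.trans h2
        omega
      calc ∑ i ∈ Finset.range n, x ^ i + x ^ n ≤ x ^ n + x ^ n := this
      _ = 2 * x ^ n := by ring
      _ = 2 * x ^ (n + 1 - 1) := by norm_num

lemma ball_bound (q l c : ℕ) (hq : 2 ≤ q) (hl : 1 ≤ l) (hc : 1 ≤ c) :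
    ∑ i ∈ Finset.range c, l.choose i * (q - 1) ^ i ≤ 2 * ((q - 1) * l) ^ (c - 1) := by
  rcases Nat.lt_or_ge ((q - 1) * l) 2 with hx | hx
  · -- (q-1)*l = 1, so q = 2 and l = 1
    have hq1 : q - 1 = 1 := by
      have : 1 ≤ (q-1) * l := Nat.one_le_iff_ne_zero.2 (by
        intro h
        rcases Nat.mul_eq_zero.1 h with h | h <;> omega)
      nlinarith [Nat.one_le_iff_ne_zero.1 hl]
    have hl1 : l = 1 := by nlinarith
    subst hl1
    rw [hq1]
    simp only [one_mul, one_pow, mul_one]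
    have : ∑ i ∈ Finset.range c, Nat.choose 1 i ≤ 2 := by
      rcases Nat.lt_or_ge c 2 with hc2 | hc2
      · interval_cases c <;> simp
      · have heq : ∑ i ∈ Finset.range c, Nat.choose 1 i = ∑ i ∈ Finset.range 2, Nat.choose 1 i := by
          refine (Finset.sum_subset (Finset.range_subset_range.2 hc2) ?_).symm
          intro i _ hi
          rw [Finset.mem_range, not_lt] at hi
          exact Nat.choose_eq_zero_of_lt (by omega)
        rw [heq]; decide
    omega
  · have hstep : ∑ i ∈ Finset.range c, l.choose i * (q - 1) ^ i
        ≤ ∑ i ∈ Finset.range c, ((q - 1) * l) ^ i := by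
      refine Finset.sum_le_sum (fun i _ => ?_)
      have h1 : l.choose i * (q - 1) ^ i ≤ l ^ i * (q - 1) ^ i :=
        Nat.mul_le_mul_right _ (Nat.choose_le_pow l i)
      have h2 : l ^ i * (q - 1) ^ i = ((q - 1) * l) ^ i := by rw [← mul_pow]; ring_nf
      omega
    exact hstep.trans (geom_bound _ hx c hc)

lemma mem_suppQ {v : Fin ℓ → F} [Zero F] {i : Fin ℓ} : i ∈ suppQ v ↔ v i ≠ 0 := by
  simp [suppQ]

lemma main_chain [AddCommGroup F] (c : ℕ) (hc : 0 < c) (d : ℕ) :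
    ∀ (W : Finset (Fin ℓ)) (T : Finset (Fin ℓ → F)),
      (∀ s ∈ T, ∀ t ∈ T, ∀ i, i ∉ W → s i = t i) →
      (Fintype.card F) ^ (c * d) * (∑ i ∈ Finset.range c, ℓ.choose i * (Fintype.card F - 1) ^ i)
        < T.card →
      ∃ (w : Fin ℓ → F) (v : Fin (d + 1) → (Fin ℓ → F)),
        (∀ j, v j ∈ T) ∧ (∀ j i, i ∉ W → v j i + w i = 0) ∧
        IncreasingChainQ c (fun j => v j + w) := by
  induction d with
  | zero =>
    intro W T hT hbig
    rw [Nat.mul_zero, pow_zero, one_mul] at hbig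
    obtain ⟨C, hCW, hCc, hSh⟩ := exists_shattered c hc W T hT hbig
    have hTne : T.Nonempty := Finset.card_pos.1 (lt_of_le_of_lt (Nat.zero_le _) hbig)
    obtain ⟨t₀, ht₀⟩ := hTne
    obtain ⟨s, hsT, hsd⟩ := hSh t₀
    refine ⟨-t₀, fun _ => s, fun _ => hsT, ?_, ?_⟩
    · intro j i hiW
      simp only [Pi.neg_apply]
      rw [hT s hsT t₀ ht₀ i hiW]
      exact add_neg_cancel _
    · intro j
      have hsub : C ⊆ suppQ (s + -t₀) \ ((Finset.Iio j).biUnion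
          (fun i => suppQ ((fun _ => s) i + -t₀))) := by
        intro i hiC
        rw [Finset.mem_sdiff]
        constructor
        · rw [mem_suppQ]
          simp only [Pi.add_apply, Pi.neg_apply]
          intro h
          exact hsd i hiC (by rwa [add_neg_eq_zero] at h)
        · intro hmem
          obtain ⟨i', hi', _⟩ := Finset.mem_biUnion.1 hmem
          have h1 := (Finset.mem_Iio.1 hi')
          have h2 : (j : ℕ) < 1 := j.isLt
          have h3 : (i' : ℕ) < (j : ℕ) := h1
          omega
      calc c = C.card := hCc.symm
      _ ≤ _ := Finset.card_le_card hsub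
  | succ d IH =>
    intro W T hT hbig
    have hq1 : 0 < Fintype.card F := Fintype.card_pos
    have hM : (∑ i ∈ Finset.range c, ℓ.choose i * (Fintype.card F - 1) ^ i) < T.card := by
      refine lt_of_le_of_lt ?_ hbig
      exact Nat.le_mul_of_pos_left _ (pow_pos hq1 _)
    obtain ⟨C, hCW, hCc, hSh⟩ := exists_shattered c hc W T hT hM
    set f : (Fin ℓ → F) → (Fin ℓ → F) := fun s j => if j ∈ C then s j else 0 with hf
    by_cases hcase : ∃ b ∈ T.image f, (Fintype.card F) ^ (c * d) *
        (∑ i ∈ Finset.range c, ℓ.choose i * (Fintype.card F - 1) ^ i)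
        < (T.filter (fun s => f s = b)).card
    · obtain ⟨b, hbmem, hbbig⟩ := hcase
      set T' := T.filter (fun s => f s = b) with hT'
      have hT'sub : T' ⊆ T := Finset.filter_subset _ _
      have hagreeC : ∀ s ∈ T', ∀ t ∈ T', ∀ i ∈ C, s i = t i := by
        intro s hs t ht i hiC
        have h1 : f s = b := (Finset.mem_filter.1 hs).2
        have h2 : f t = b := (Finset.mem_filter.1 ht).2
        have := congrFun (h1.trans h2.symm) i
        simpa [hf, if_pos hiC] using this
      have hT'diff : ∀ s ∈ T', ∀ t ∈ T', ∀ i, i ∉ W \ C → s i = t i := by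
        intro s hs t ht i hi
        rw [Finset.mem_sdiff] at hi
        push_neg at hi
        by_cases hiW : i ∈ W
        · exact hagreeC s hs t ht i (hi hiW)
        · exact hT s (hT'sub hs) t (hT'sub ht) i hiW
      obtain ⟨w, v', hv'T, hv'supp, hv'chain⟩ := IH (W \ C) T' hT'diff hbbig
      have hT'ne : T'.Nonempty := Finset.card_pos.1 (lt_of_le_of_lt (Nat.zero_le _) hbbig)
      obtain ⟨u₀, hu₀⟩ := hT'ne
      obtain ⟨sstar, hsstarT, hsstardiff⟩ := hSh u₀
      -- key facts
      have hzeroC : ∀ (k : Fin (d + 1)) (i : Fin ℓ), i ∈ C → v' k i + w i = 0 := by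
        intro k i hiC
        exact hv'supp k i (fun h => (Finset.mem_sdiff.1 h).2 hiC)
      have hsstarC : ∀ i ∈ C, sstar i + w i ≠ 0 := by
        intro i hiC h
        have h1 : v' 0 i + w i = 0 := hzeroC 0 i hiC
        have h2 : v' 0 i = u₀ i := hagreeC (v' 0) (hv'T 0) u₀ hu₀ i hiC
        have : sstar i = u₀ i := by
          have := h.trans h1.symm
          rw [h2] at this
          exact add_right_cancel this
        exact hsstardiff i hiC this
      refine ⟨w, Fin.snoc v' sstar, ?_, ?_, ?_⟩
      · intro j
        refine Fin.lastCases ?_ ?_ j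
        · rw [Fin.snoc_last]; exact hsstarT
        · intro j'; rw [Fin.snoc_castSucc]; exact hT'sub (hv'T j')
      · intro j i hiW
        refine Fin.lastCases ?_ (fun j' => ?_) j
        · rw [Fin.snoc_last]
          have h1 : sstar i = v' 0 i := hT sstar hsstarT (v' 0) (hT'sub (hv'T 0)) i hiW
          rw [h1]
          exact hv'supp 0 i (fun h => hiW (Finset.mem_sdiff.1 h).1)
        · rw [Fin.snoc_castSucc]
          exact hv'supp j' i (fun h => hiW (Finset.mem_sdiff.1 h).1)
      · intro j
        refine Fin.lastCases ?_ (fun j' => ?_) j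
        · -- last element: C is fresh support
          have hsub : C ⊆ suppQ ((Fin.snoc v' sstar : Fin (d + 1 + 1) → (Fin ℓ → F)) (Fin.last (d + 1)) + w) \
              ((Finset.Iio (Fin.last (d + 1))).biUnion
                (fun i => suppQ ((Fin.snoc v' sstar : Fin (d + 1 + 1) → (Fin ℓ → F)) i + w))) := by
            intro i hiC
            rw [Finset.mem_sdiff]
            constructor
            · rw [mem_suppQ]
              simp only [Fin.snoc_last, Pi.add_apply]
              exact hsstarC i hiC
            · intro hmem
              obtain ⟨i', hi', hisupp⟩ := Finset.mem_biUnion.1 hmem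
              have hne : i' ≠ Fin.last (d + 1) := Fin.ne_of_lt (Finset.mem_Iio.1 hi')
              obtain ⟨i'', rfl⟩ := Fin.exists_castSucc_eq.2 hne
              rw [Fin.snoc_castSucc, mem_suppQ] at hisupp
              exact hisupp (hzeroC i'' i hiC)
          calc c = C.card := hCc.symm
          _ ≤ _ := Finset.card_le_card hsub
        · -- earlier elements: inherited from the chain of v'
          have hch := hv'chain j'
          have hUsub : ((Finset.Iio (Fin.castSucc j')).biUnion
                (fun i => suppQ ((Fin.snoc v' sstar : Fin (d + 1 + 1) → (Fin ℓ → F)) i + w)))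
              ⊆ (Finset.Iio j').biUnion (fun i => suppQ (v' i + w)) := by
            intro x hx
            obtain ⟨i', hi', hxs⟩ := Finset.mem_biUnion.1 hx
            have hlt : i' < Fin.castSucc j' := Finset.mem_Iio.1 hi'
            have hne : i' ≠ Fin.last (d + 1) := by
              intro h
              rw [h] at hlt
              exact absurd hlt (not_lt.2 (Fin.le_last _))
            obtain ⟨i'', rfl⟩ := Fin.exists_castSucc_eq.2 hne
            rw [Fin.snoc_castSucc] at hxs
            refine Finset.mem_biUnion.2 ⟨i'', Finset.mem_Iio.2 ?_, hxs⟩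
            exact (Fin.castSucc_lt_castSucc_iff).1 hlt
          have hsdiff : suppQ (v' j' + w) \ ((Finset.Iio j').biUnion (fun i => suppQ (v' i + w)))
              ⊆ suppQ ((Fin.snoc v' sstar : Fin (d + 1 + 1) → (Fin ℓ → F)) (Fin.castSucc j') + w) \
                ((Finset.Iio (Fin.castSucc j')).biUnion
                  (fun i => suppQ ((Fin.snoc v' sstar : Fin (d + 1 + 1) → (Fin ℓ → F)) i + w))) := by
            rw [Fin.snoc_castSucc]
            exact Finset.sdiff_subset_sdiff (Finset.Subset.refl _) hUsub
          exact le_trans hch (Finset.card_le_card hsdiff)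
    · push_neg at hcase
      exfalso
      have hfib : T.card = ∑ b ∈ T.image f, (T.filter (fun s => f s = b)).card :=
        Finset.card_eq_sum_card_fiberwise (fun x hx => Finset.mem_image_of_mem f hx)
      have himg : (T.image f).card ≤ (Fintype.card F) ^ c := by
        have hinj : Set.InjOn (fun (s : Fin ℓ → F) => (fun i : {x // x ∈ C} => s i.1))
            ↑(T.image f) := by
          intro s₁ hs₁ s₂ hs₂ heq
          obtain ⟨t₁, _, rfl⟩ := Finset.mem_image.1 hs₁
          obtain ⟨t₂, _, rfl⟩ := Finset.mem_image.1 hs₂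
          funext i
          by_cases hiC : i ∈ C
          · have := congrFun heq ⟨i, hiC⟩
            simpa [hf, if_pos hiC] using this
          · simp [hf, if_neg hiC]
        calc (T.image f).card ≤ Fintype.card ({x // x ∈ C} → F) :=
          Finset.card_le_card_of_injOn _ (fun x _ => Finset.mem_univ _) hinj
        _ = (Fintype.card F) ^ C.card := by
          rw [Fintype.card_fun, Fintype.card_coe]
        _ = (Fintype.card F) ^ c := by rw [hCc]
      have hsum : T.card ≤ (T.image f).card * ((Fintype.card F) ^ (c * d) *
          (∑ i ∈ Finset.range c, ℓ.choose i * (Fintype.card F - 1) ^ i)) := by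
        rw [hfib]
        exact Finset.sum_le_card_nsmul _ _ _ (fun b hb => hcase b hb)
      have : T.card ≤ (Fintype.card F) ^ (c * (d + 1)) *
          (∑ i ∈ Finset.range c, ℓ.choose i * (Fintype.card F - 1) ^ i) := by
        calc T.card ≤ _ := hsum
        _ ≤ (Fintype.card F) ^ c * ((Fintype.card F) ^ (c * d) *
            (∑ i ∈ Finset.range c, ℓ.choose i * (Fintype.card F - 1) ^ i)) :=
          Nat.mul_le_mul_right _ himg
        _ = (Fintype.card F) ^ (c * (d + 1)) *
            (∑ i ∈ Finset.range c, ℓ.choose i * (Fintype.card F - 1) ^ i) := by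
          rw [← mul_assoc, ← pow_add]
          rw [show c * (d + 1) = c + c * d by ring]
      exact absurd hbig (not_lt.2 this)

end IncChainAux

/-- Lemma 6.2 (`q`-ary increasing chains): for a prime power `q` (realized as the
cardinality of a finite field `F`), all positive integers `c, ℓ` and `1 ≤ L ≤ q^ℓ`,
every `S ⊆ 𝔽_q^ℓ` with `|S| = L` has a translate `S + w` containing a `c`-increasing
chain of length at least `(1/c) log_q (L/2) - (1 - 1/c) log_q ((q-1) ℓ)`. -/
theorem increasing_chain_qary (F : Type*) [Field F] [Fintype F] [DecidableEq F]
    (c ℓ : ℕ) (hc : 0 < c) (hℓ : 0 < ℓ)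
    (L : ℕ) (hL1 : 1 ≤ L) (hL2 : L ≤ Fintype.card F ^ ℓ)
    (S : Finset (Fin ℓ → F)) (hS : S.card = L) :
    ∃ (w : Fin ℓ → F) (d : ℕ) (v : Fin d → (Fin ℓ → F)),
      ((1 : ℝ) / c) * Real.logb (Fintype.card F) ((L : ℝ) / 2) -
          (1 - (1 : ℝ) / c) *
            Real.logb (Fintype.card F) (((Fintype.card F : ℝ) - 1) * ℓ) ≤ d ∧
      (∀ j, v j ∈ S) ∧
      IncreasingChainQ c (fun j => v j + w) := by
  classical
  set q := Fintype.card F with hq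
  have hq2 : 2 ≤ q := Fintype.one_lt_card
  set R : ℝ := ((1 : ℝ) / c) * Real.logb q ((L : ℝ) / 2) -
      (1 - (1 : ℝ) / c) * Real.logb q (((q : ℝ) - 1) * ℓ) with hR
  by_cases hRpos : R ≤ 0
  · refine ⟨0, 0, fun j => j.elim0, ?_, fun j => j.elim0, fun j => j.elim0⟩
    simpa using hRpos
  · push_neg at hRpos
    set x : ℕ := (q - 1) * ℓ with hx
    have hx1 : 1 ≤ x := Nat.one_le_iff_ne_zero.2 (by
      intro h
      rcases Nat.mul_eq_zero.1 h with h | h <;> omega)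
    have hxcast : ((q : ℝ) - 1) * (ℓ : ℝ) = (x : ℝ) := by
      rw [hx]
      push_cast [Nat.cast_sub (by omega : 1 ≤ q)]
      ring
    set M : ℕ := ∑ i ∈ Finset.range c, ℓ.choose i * (q - 1) ^ i with hM
    set d : ℕ := ⌈R⌉₊ with hd
    have hd1 : 1 ≤ d := Nat.one_le_iff_ne_zero.2 (by
      intro h
      rw [hd] at h
      exact absurd (Nat.ceil_eq_zero.1 h) (not_le.2 hRpos))
    set e : ℕ := d - 1 with he
    have hde : d = e + 1 := by omega
    have heR : (e : ℝ) < R := by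
      by_contra hcon
      push_neg at hcon
      have : d ≤ e := Nat.ceil_le.2 hcon
      omega
    -- the key numeric inequality
    have hnat : q ^ (c * e) * M < L := by
      by_contra hcon
      push_neg at hcon
      have hMle : M ≤ 2 * x ^ (c - 1) := IncChainAux.ball_bound q ℓ c hq2 hℓ hc
      have hL2x : (L : ℝ) ≤ (q : ℝ) ^ (c * e) * (2 * (x : ℝ) ^ (c - 1)) := by
        have : L ≤ q ^ (c * e) * (2 * x ^ (c - 1)) :=
          hcon.trans (Nat.mul_le_mul_left _ hMle)
        exact_mod_cast this
      have hq1R : (1 : ℝ) < (q : ℝ) := by exact_mod_cast hq2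
      have hxposR : (0 : ℝ) < (x : ℝ) := by exact_mod_cast hx1
      have hL2pos : (0 : ℝ) < (L : ℝ) / 2 := by
        have : (0 : ℝ) < (L : ℝ) := by exact_mod_cast hL1
        linarith
      have hprodpos : (0 : ℝ) < (q : ℝ) ^ (c * e) * (x : ℝ) ^ (c - 1) := by positivity
      have hlogle : Real.logb q ((L : ℝ) / 2) ≤
          Real.logb q ((q : ℝ) ^ (c * e) * (x : ℝ) ^ (c - 1)) := by
        refine Real.logb_le_logb_of_le hq1R hL2pos ?_
        linarith
      have hlogeq : Real.logb q ((q : ℝ) ^ (c * e) * (x : ℝ) ^ (c - 1))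
          = (c * e : ℕ) + ((c : ℝ) - 1) * Real.logb q (x : ℝ) := by
        rw [Real.logb_mul (by positivity) (by positivity), Real.logb_pow, Real.logb_pow,
          Real.logb_self_eq_one hq1R]
        push_cast [Nat.cast_sub hc]
        ring
      -- conclude R ≤ e
      have hA : Real.logb q ((L : ℝ) / 2) ≤ (c : ℝ) * e + ((c : ℝ) - 1) * Real.logb q (x : ℝ) := by
        rw [hlogeq] at hlogle
        push_cast at hlogle
        linarith
      have hcpos : (0 : ℝ) < (c : ℝ) := by exact_mod_cast hc
      have hRle : R ≤ e := by
        rw [hR, hxcast]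
        have h1 : ((1 : ℝ) / c) * Real.logb q ((L : ℝ) / 2) ≤
            ((1 : ℝ) / c) * ((c : ℝ) * e + ((c : ℝ) - 1) * Real.logb q (x : ℝ)) := by
          apply mul_le_mul_of_nonneg_left hA
          positivity
        have h2 : ((1 : ℝ) / c) * ((c : ℝ) * e + ((c : ℝ) - 1) * Real.logb q (x : ℝ))
            - (1 - (1 : ℝ) / c) * Real.logb q (x : ℝ) = e := by
          field_simp
          ring
        linarith
      linarith
    -- apply the combinatorial main lemma
    have hdiff : ∀ s ∈ S, ∀ t ∈ S, ∀ i : Fin ℓ, i ∉ (Finset.univ : Finset (Fin ℓ)) → s i = t i :=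
      fun s _ t _ i hi => absurd (Finset.mem_univ i) hi
    have hbig : (Fintype.card F) ^ (c * e) *
        (∑ i ∈ Finset.range c, ℓ.choose i * (Fintype.card F - 1) ^ i) < S.card := by
      rw [hS]
      exact hnat
    obtain ⟨w, v, hvS, _, hchain⟩ := IncChainAux.main_chain c hc e Finset.univ S hdiff hbig
    refine ⟨w, e + 1, v, ?_, hvS, hchain⟩
    have : R ≤ d := Nat.le_ceil R
    rw [hde] at this
    exact_mod_cast this
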